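/- For every 0 < δ < 1/2 with H(δ) < 1/2 (H the binary entropy), there exists C > 0 such that for all sufficiently large n, there is a set S ⊆ {0,1}^n with |S| ≥ 2^{Cn}, such that every x ∈ S has relative Hamming weight in [1/3, 2/3], and for all distinct x, x' ∈ S the sets B^δ(x) ∪ B^δ(1-x) and B^δ(x') ∪ B^δ(1-x') are disjoint, where B^δ(y) is the set of strings at normalized Hamming distance at most δ from y. -/

import Mathlib

/-- The binary entropy function `H(p) = -p log₂ p - (1-p) log₂ (1-p)`. -/
noncomputable def binEntropy (p : ℝ) : ℝ :=
  -p * Real.logb 2 p - (1 - p) * Real.logb 2 (1 - p)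

/-- Normalized Hamming distance between two strings in `{0,1}^n`. -/
noncomputable def hamDist {n : ℕ} (x y : Fin n → Bool) : ℝ :=
  ((Finset.univ.filter fun i => x i ≠ y i).card : ℝ) / n

/-- Relative Hamming weight of a string in `{0,1}^n`. -/
noncomputable def relWeight {n : ℕ} (x : Fin n → Bool) : ℝ :=
  ((Finset.univ.filter fun i => x i = true).card : ℝ) / n

/-- Closed ball of normalized Hamming radius `δ` around `x`. -/
noncomputable def hamBall {n : ℕ} (δ : ℝ) (x : Fin n → Bool) : Set (Fin n → Bool) :=
  {y | hamDist x y ≤ δ}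

section Aux

variable {n : ℕ}

/-- Integer Hamming distance. -/
def dist0 (x y : Fin n → Bool) : ℕ := (Finset.univ.filter fun i => x i ≠ y i).card

/-- Entrywise complement. -/
def cmpl (x : Fin n → Bool) : Fin n → Bool := fun i => !(x i)

lemma cmpl_cmpl (x : Fin n → Bool) : cmpl (cmpl x) = x := by funext i; simp [cmpl]

lemma hamDist_eq_dist0 (x y : Fin n → Bool) : hamDist x y = (dist0 x y : ℝ) / n := rfl

lemma dist0_comm (x y : Fin n → Bool) : dist0 x y = dist0 y x := by
  unfold dist0; congr 1; apply Finset.filter_congr; intro i _; simp [ne_comm]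

lemma dist0_cmpl_cmpl (x y : Fin n → Bool) : dist0 (cmpl x) (cmpl y) = dist0 x y := by
  unfold dist0; congr 1; apply Finset.filter_congr; intro i _
  simp only [cmpl]; cases x i <;> cases y i <;> simp

lemma dist0_cmpl_left (x y : Fin n → Bool) : dist0 (cmpl x) y = dist0 x (cmpl y) := by
  conv_lhs => rw [← cmpl_cmpl y]
  rw [dist0_cmpl_cmpl]

lemma dist0_triangle (x y z : Fin n → Bool) : dist0 x y ≤ dist0 x z + dist0 z y := by
  unfold dist0
  refine le_trans (Finset.card_le_card ?_) (Finset.card_union_le _ _)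
  intro i hi
  simp only [Finset.mem_filter, Finset.mem_union, Finset.mem_univ, true_and, ne_eq] at *
  by_contra h
  push_neg at h
  exact hi (h.1.trans h.2)

lemma card_ball_le (x : Fin n → Bool) (M : ℕ) :
    (Finset.univ.filter fun y => dist0 x y ≤ M).card ≤ ∑ k ∈ Finset.range (M+1), n.choose k := by
  have h : (∑ k ∈ Finset.range (M+1), n.choose k)
      = ((Finset.range (M+1)).sigma fun k => (Finset.univ : Finset (Fin n)).powersetCard k).card := by
    rw [Finset.card_sigma]
    refine Finset.sum_congr rfl fun k _ => ?_
    rw [Finset.card_powersetCard, Finset.card_univ, Fintype.card_fin]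
  rw [h]
  apply Finset.card_le_card_of_injOn
    (fun y => ⟨dist0 x y, Finset.univ.filter fun i => x i ≠ y i⟩)
  · intro y hy
    simp only [Finset.mem_coe, Finset.mem_filter, Finset.mem_univ, true_and] at hy
    simp only [Finset.mem_coe, Finset.mem_sigma, Finset.mem_range, Finset.mem_powersetCard]
    exact ⟨Nat.lt_succ_of_le hy, Finset.subset_univ _, rfl⟩
  · intro y _ y' _ h
    simp only [Sigma.mk.inj_iff, heq_eq_eq] at h
    have h2 := h.2
    funext i
    have hmem := Finset.ext_iff.mp h2 i
    simp only [Finset.mem_filter, Finset.mem_univ, true_and, ne_eq] at hmem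
    cases hx : x i <;> cases hy : y i <;> cases hy' : y' i <;> simp [hx, hy, hy'] at hmem ⊢

lemma card_ball_cmpl (x : Fin n → Bool) (M : ℕ) :
    (Finset.univ.filter fun y => dist0 x (cmpl y) ≤ M).card
      = (Finset.univ.filter fun y => dist0 x y ≤ M).card := by
  refine Finset.card_nbij' cmpl cmpl ?_ ?_ ?_ ?_
  · intro y hy
    simp only [Finset.mem_coe, Finset.mem_filter, Finset.mem_univ, true_and] at *
    exact hy
  · intro y hy
    simp only [Finset.mem_coe, Finset.mem_filter, Finset.mem_univ, true_and, cmpl_cmpl] at *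
    exact hy
  · intro y _; exact cmpl_cmpl y
  · intro y _; exact cmpl_cmpl y

lemma card_weight_eq (w : ℕ) :
    (Finset.univ.filter fun x : Fin n → Bool =>
      (Finset.univ.filter fun i => x i = true).card = w).card = n.choose w := by
  have h : n.choose w = ((Finset.univ : Finset (Fin n)).powersetCard w).card := by
    rw [Finset.card_powersetCard, Finset.card_univ, Fintype.card_fin]
  rw [h]
  refine Finset.card_nbij' (fun x => Finset.univ.filter fun i => x i = true)
    (fun s => fun i => decide (i ∈ s)) ?_ ?_ ?_ ?_
  · intro x hx
    simp only [Finset.mem_coe, Finset.mem_filter, Finset.mem_univ, true_and] at hx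
    simp only [Finset.mem_coe, Finset.mem_powersetCard]
    exact ⟨Finset.subset_univ _, hx⟩
  · intro s hs
    simp only [Finset.mem_coe, Finset.mem_powersetCard] at hs
    simp only [Finset.mem_coe, Finset.mem_filter, Finset.mem_univ, true_and]
    rw [← hs.2]
    congr 1
    ext i; simp
  · intro x _
    funext i; simp
  · intro s _
    ext i; simp

lemma two_pow_le_central : 2 ^ n ≤ (n+1) * n.choose (n/2) := by
  calc 2 ^ n = ∑ i ∈ Finset.range (n+1), n.choose i := (Nat.sum_range_choose n).symm
    _ ≤ ∑ _i ∈ Finset.range (n+1), n.choose (n/2) :=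
        Finset.sum_le_sum fun i _ => Nat.choose_le_middle i n
    _ = (n+1) * n.choose (n/2) := by rw [Finset.sum_const, Finset.card_range, smul_eq_mul]

end Aux

lemma greedy {α : Type*} [DecidableEq α] (r : α → α → Prop) [∀ x, DecidablePred (r x)]
    (hsymm : ∀ x y, r x y → r y x) (hrefl : ∀ x, r x x) (K : ℕ) (A : Finset α)
    (hA : ∀ x ∈ A, (A.filter (fun y => r x y)).card ≤ K) :
    ∃ S ⊆ A, (∀ x ∈ S, ∀ y ∈ S, x ≠ y → ¬ r x y) ∧ A.card ≤ K * S.card := by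
  induction A using Finset.strongInduction with
  | _ A ih =>
    rcases A.eq_empty_or_nonempty with rfl | ⟨x, hx⟩
    · exact ⟨∅, by simp⟩
    · set B := A.filter (fun y => r x y) with hBdef
      have hB : B ⊆ A := Finset.filter_subset _ _
      have hxB : x ∈ B := Finset.mem_filter.2 ⟨hx, hrefl x⟩
      have hssub : A \ B ⊂ A := Finset.sdiff_ssubset hB ⟨x, hxB⟩
      obtain ⟨S, hSsub, hSind, hScard⟩ := ih (A \ B) hssub
        (fun y hy => le_trans (Finset.card_le_card
          (Finset.filter_subset_filter _ (Finset.sdiff_subset)))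
          (hA y (Finset.sdiff_subset hy)))
      have hxS : x ∉ S := fun h => (Finset.mem_sdiff.1 (hSsub h)).2 hxB
      refine ⟨insert x S, ?_, ?_, ?_⟩
      · exact Finset.insert_subset hx (hSsub.trans Finset.sdiff_subset)
      · intro a ha b hb hab
        rcases Finset.mem_insert.1 ha with rfl | ha' <;>
          rcases Finset.mem_insert.1 hb with rfl | hb'
        · exact absurd rfl hab
        · intro hr
          exact (Finset.mem_sdiff.1 (hSsub hb')).2
            (Finset.mem_filter.2 ⟨(Finset.mem_sdiff.1 (hSsub hb')).1, hr⟩)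
        · intro hr
          exact (Finset.mem_sdiff.1 (hSsub ha')).2
            (Finset.mem_filter.2 ⟨(Finset.mem_sdiff.1 (hSsub ha')).1, hsymm _ _ hr⟩)
        · exact hSind a ha' b hb' hab
      · have hBK : B.card ≤ K := hA x hx
        have hBA : B.card ≤ A.card := Finset.card_le_card hB
        have h1 : A.card ≤ (A \ B).card + K := by
          rw [Finset.card_sdiff_of_subset hB]
          omega
        rw [Finset.card_insert_of_notMem hxS, Nat.mul_add, Nat.mul_one]
        omega

lemma rpow_entropy_eq (p : ℝ) (hp : 0 < p) (hp1 : p < 1) (n : ℕ) :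
    (2:ℝ) ^ (binEntropy p * n) = (p ^ (p * n) * (1-p) ^ ((n:ℝ) - p * n))⁻¹ := by
  have hq : 0 < 1 - p := by linarith
  have h2 : (0:ℝ) ≤ 2 := by norm_num
  have hEnt : binEntropy p * n = Real.logb 2 p * (-(p*n)) + Real.logb 2 (1-p) * (-((n:ℝ) - p*n)) := by
    unfold binEntropy; ring
  rw [hEnt, Real.rpow_add (by norm_num : (0:ℝ) < 2),
    Real.rpow_mul h2, Real.rpow_mul h2,
    Real.rpow_logb (by norm_num) (by norm_num) hp,
    Real.rpow_logb (by norm_num) (by norm_num) hq,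
    Real.rpow_neg hp.le, Real.rpow_neg hq.le, mul_inv]

lemma sum_choose_le_entropy (p : ℝ) (hp : 0 < p) (hp2 : p ≤ 1/2) (n M : ℕ)
    (hM : (M:ℝ) ≤ p * n) :
    (∑ k ∈ Finset.range (M+1), (n.choose k : ℝ)) ≤ (2:ℝ) ^ (binEntropy p * n) := by
  set q := 1 - p with hqdef
  have hq : 0 < q := by rw [hqdef]; linarith
  have hpq : p ≤ q := by rw [hqdef]; linarith
  have hpn : p * n ≤ (n:ℝ) := by
    calc p * n ≤ 1 * n := by
          apply mul_le_mul_of_nonneg_right (by linarith) (Nat.cast_nonneg n)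
      _ = n := one_mul _
  have hMn : M ≤ n := by
    have : (M:ℝ) ≤ (n:ℝ) := le_trans hM hpn
    exact_mod_cast this
  set X := p ^ (p * n) * q ^ ((n:ℝ) - p * n) with hXdef
  have hX : 0 < X :=
    mul_pos (Real.rpow_pos_of_pos hp _) (Real.rpow_pos_of_pos hq _)
  have key : ∀ k ∈ Finset.range (M+1),
      (n.choose k : ℝ) * X ≤ (n.choose k : ℝ) * (p ^ k * q ^ (n - k)) := by
    intro k hk
    simp only [Finset.mem_range] at hk
    have hkM : k ≤ M := Nat.lt_succ_iff.1 hk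
    have hkpn : (k:ℝ) ≤ p * n := le_trans (by exact_mod_cast hkM) hM
    have hkn : k ≤ n := le_trans hkM hMn
    apply mul_le_mul_of_nonneg_left _ (Nat.cast_nonneg _)
    have ht : (0:ℝ) ≤ p * n - k := by linarith
    have e1 : p ^ (p * n) = p ^ (k:ℝ) * p ^ (p * n - (k:ℝ)) := by
      rw [← Real.rpow_add hp]; ring_nf
    have e2 : q ^ ((n:ℝ) - k) = q ^ ((n:ℝ) - p * n) * q ^ (p * n - (k:ℝ)) := by
      rw [← Real.rpow_add hq]; ring_nf
    have e3 : p ^ (p * n - (k:ℝ)) ≤ q ^ (p * n - (k:ℝ)) :=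
      Real.rpow_le_rpow hp.le hpq ht
    have hXle : X ≤ p ^ (k:ℝ) * q ^ ((n:ℝ) - k) := by
      rw [hXdef, e1, e2]
      calc p ^ (k:ℝ) * p ^ (p * n - (k:ℝ)) * (q ^ ((n:ℝ) - p*n))
            ≤ p ^ (k:ℝ) * q ^ (p * n - (k:ℝ)) * (q ^ ((n:ℝ) - p*n)) := by
              apply mul_le_mul_of_nonneg_right
                (mul_le_mul_of_nonneg_left e3 (Real.rpow_nonneg hp.le _))
                (Real.rpow_nonneg hq.le _)
        _ = p ^ (k:ℝ) * (q ^ ((n:ℝ) - p*n) * q ^ (p * n - (k:ℝ))) := by ring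
    calc X ≤ p ^ (k:ℝ) * q ^ ((n:ℝ) - k) := hXle
      _ = p ^ k * q ^ (n - k) := by
          rw [← Real.rpow_natCast p k, ← Real.rpow_natCast q (n-k)]
          congr 2
          rw [Nat.cast_sub hkn]
  have hsum : (∑ k ∈ Finset.range (M+1), (n.choose k : ℝ)) * X ≤ 1 := by
    rw [Finset.sum_mul]
    calc (∑ k ∈ Finset.range (M+1), (n.choose k : ℝ) * X)
        ≤ ∑ k ∈ Finset.range (M+1), (n.choose k : ℝ) * (p ^ k * q ^ (n - k)) :=
          Finset.sum_le_sum key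
      _ ≤ ∑ k ∈ Finset.range (n+1), (n.choose k : ℝ) * (p ^ k * q ^ (n - k)) := by
          apply Finset.sum_le_sum_of_subset_of_nonneg
            (Finset.range_subset_range.2 (by omega))
          intro k _ _
          positivity
      _ = (p + q) ^ n := by
          rw [add_pow]
          refine Finset.sum_congr rfl fun k _ => by ring
      _ = 1 := by rw [hqdef]; norm_num
  rw [rpow_entropy_eq p hp (by linarith) n, ← hqdef, ← hXdef]
  rw [← one_div]
  exact (le_div_iff₀ hX).2 hsum

lemma binEntropy_eq_real (p : ℝ) : binEntropy p = Real.binEntropy p / Real.log 2 := by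
  unfold binEntropy Real.binEntropy Real.logb
  rw [Real.log_inv, Real.log_inv]
  ring

lemma quarter_le (δ : ℝ) (hδ0 : 0 < δ) (hδ1 : δ < 1/2) (hH : binEntropy δ < 1/2) :
    δ ≤ 1/4 := by
  by_contra h
  push_neg at h
  have hlog2 : (0:ℝ) < Real.log 2 := Real.log_pos (by norm_num)
  have hmono := Real.binEntropy_strictMonoOn
    (show (1:ℝ)/4 ∈ Set.Icc (0:ℝ) 2⁻¹ by constructor <;> norm_num)
    (show δ ∈ Set.Icc (0:ℝ) 2⁻¹ by constructor <;> [linarith; linarith])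
    h
  have hq : Real.binEntropy (1/4) ≥ (1/2) * Real.log 2 := by
    unfold Real.binEntropy
    have h43 : Real.log ((1 - 1/4 : ℝ))⁻¹ ≥ 0 := by
      apply Real.log_nonneg
      norm_num
    have h4 : Real.log ((1/4:ℝ))⁻¹ = 2 * Real.log 2 := by
      norm_num
      rw [show (4:ℝ) = 2^2 by norm_num, Real.log_pow]
      push_cast; ring
    rw [h4]
    nlinarith
  have : binEntropy δ > 1/2 := by
    rw [binEntropy_eq_real]
    rw [gt_iff_lt, lt_div_iff₀ hlog2]
    calc (1:ℝ)/2 * Real.log 2 ≤ Real.binEntropy (1/4) := hq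
      _ < Real.binEntropy δ := hmono
  linarith

lemma entropy_double_lt_one (δ : ℝ) (hδ0 : 0 < δ) (hδ1 : δ < 1/2) (hH : binEntropy δ < 1/2) :
    binEntropy (2*δ) < 1 := by
  have hlog2 : (0:ℝ) < Real.log 2 := Real.log_pos (by norm_num)
  have hcc := Real.strictConcave_binEntropy.concaveOn
  have h0 : (0:ℝ) ∈ Set.Icc (0:ℝ) 1 := by constructor <;> norm_num
  have h2 : (2*δ) ∈ Set.Icc (0:ℝ) 1 := by constructor <;> linarith
  have hkey := hcc.2 h0 h2 (by norm_num : (0:ℝ) ≤ 1/2) (by norm_num : (0:ℝ) ≤ 1/2) (by norm_num)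
  simp only [smul_eq_mul, Real.binEntropy_zero, mul_zero, zero_add] at hkey
  have hδeq : (1/2 : ℝ) * (2*δ) = δ := by ring
  rw [hδeq] at hkey
  rw [binEntropy_eq_real] at hH ⊢
  rw [div_lt_iff₀ hlog2] at hH ⊢
  nlinarith

lemma eventually_pow_ge (c : ℝ) (hc : 0 < c) :
    ∃ n₀ : ℕ, ∀ n ≥ n₀, 2 * ((n:ℝ) + 1) ≤ (2:ℝ) ^ (c * n) := by
  set r := (2:ℝ) ^ c with hr
  have hr1 : 1 < r := Real.one_lt_rpow_iff_of_pos (by norm_num) |>.2 (by norm_num; exact hc)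
  have hr0 : 0 < r := lt_trans one_pos hr1
  have hinv : r⁻¹ < 1 := inv_lt_one_of_one_lt₀ hr1
  have hinv0 : (0:ℝ) ≤ r⁻¹ := by positivity
  have htend := tendsto_self_mul_const_pow_of_lt_one hinv0 hinv
  have hev : ∀ᶠ n : ℕ in Filter.atTop, (n:ℝ) * r⁻¹ ^ n < 1/4 :=
    htend.eventually_lt_const (by norm_num)
  obtain ⟨n₁, hn₁⟩ := Filter.eventually_atTop.1 hev
  refine ⟨max n₁ 1, fun n hn => ?_⟩
  have hn1 : 1 ≤ n := le_trans (le_max_right _ _) hn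
  have hnn₁ : n₁ ≤ n := le_trans (le_max_left _ _) hn
  have h := hn₁ n hnn₁
  have hrn : (0:ℝ) < r ^ n := pow_pos hr0 n
  rw [inv_pow] at h
  have h4n : 4 * (n:ℝ) ≤ r ^ n := by
    rw [mul_inv_lt_iff₀ hrn] at h
    nlinarith
  have hcast : (2:ℝ) ^ (c * n) = r ^ n := by
    rw [hr, ← Real.rpow_natCast ((2:ℝ)^c) n, ← Real.rpow_mul (by norm_num)]
  rw [hcast]
  have hcast1 : (1:ℝ) ≤ (n:ℝ) := by exact_mod_cast hn1
  nlinarith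

set_option maxHeartbeats 2000000 in
theorem exists_large_pm_separated_code (δ : ℝ)
    (hδ0 : 0 < δ) (hδ1 : δ < 1 / 2) (hH : binEntropy δ < 1 / 2) :
    ∃ C > (0 : ℝ), ∃ n₀ : ℕ, ∀ n ≥ n₀, ∃ 𝒮 : Finset (Fin n → Bool),
      (2 : ℝ) ^ (C * n) ≤ 𝒮.card ∧
      (∀ x ∈ 𝒮, 1 / 3 ≤ relWeight x ∧ relWeight x ≤ 2 / 3) ∧
      (∀ x ∈ 𝒮, ∀ x' ∈ 𝒮, x ≠ x' →
        Disjoint (hamBall δ x ∪ hamBall δ (fun i => !(x i)))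
          (hamBall δ x' ∪ hamBall δ (fun i => !(x' i)))) := by
  have hδ4 : δ ≤ 1/4 := quarter_le δ hδ0 hδ1 hH
  set p := 2*δ with hpdef
  have hp0 : 0 < p := by rw [hpdef]; linarith
  have hp2 : p ≤ 1/2 := by rw [hpdef]; linarith
  have hHp : binEntropy p < 1 := entropy_double_lt_one δ hδ0 hδ1 hH
  have hHp0 : 0 ≤ binEntropy p := by
    rw [binEntropy_eq_real]
    have := Real.binEntropy_nonneg (p := p) hp0.le (by linarith)
    have hlog2 : (0:ℝ) < Real.log 2 := Real.log_pos (by norm_num)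
    positivity
  set ε := 1 - binEntropy p with hεdef
  have hε0 : 0 < ε := by rw [hεdef]; linarith
  refine ⟨ε/3, by positivity, ?_⟩
  obtain ⟨n₁, hn₁⟩ := eventually_pow_ge (2*ε/3) (by positivity)
  refine ⟨max n₁ 2, fun n hn => ?_⟩
  have hn2 : 2 ≤ n := le_trans (le_max_right _ _) hn
  have hnn₁ : n₁ ≤ n := le_trans (le_max_left _ _) hn
  have hnpos : 0 < n := by omega
  have hnR : (0:ℝ) < n := by exact_mod_cast hnpos
  set M := Nat.floor (p * n) with hMdef
  have hpn0 : (0:ℝ) ≤ p * n := by positivity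
  have hMle : (M:ℝ) ≤ p * n := Nat.floor_le hpn0
  set A := Finset.univ.filter
    (fun x : Fin n → Bool => (Finset.univ.filter fun i => x i = true).card = n/2) with hAdef
  set V := ∑ k ∈ Finset.range (M+1), n.choose k with hVdef
  have hV1 : 1 ≤ V := by
    rw [hVdef]
    calc 1 = n.choose 0 := (Nat.choose_zero_right n).symm
      _ ≤ ∑ k ∈ Finset.range (M+1), n.choose k :=
        Finset.single_le_sum (fun k _ => Nat.zero_le _) (Finset.mem_range.2 (by omega))
  -- the conflict relation
  have hsymm : ∀ x y : Fin n → Bool,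
      (dist0 x y ≤ M ∨ dist0 x (cmpl y) ≤ M) → (dist0 y x ≤ M ∨ dist0 y (cmpl x) ≤ M) := by
    intro x y h
    rcases h with h | h
    · left; rw [dist0_comm]; exact h
    · right; rw [← dist0_cmpl_left, dist0_comm]; exact h
  have hrefl : ∀ x : Fin n → Bool, dist0 x x ≤ M ∨ dist0 x (cmpl x) ≤ M := by
    intro x
    left
    have : dist0 x x = 0 := by unfold dist0; simp
    omega
  have hcount : ∀ x ∈ A,
      (A.filter (fun y => dist0 x y ≤ M ∨ dist0 x (cmpl y) ≤ M)).card ≤ 2 * V := by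
    intro x _
    calc (A.filter (fun y => dist0 x y ≤ M ∨ dist0 x (cmpl y) ≤ M)).card
        ≤ (Finset.univ.filter (fun y => dist0 x y ≤ M ∨ dist0 x (cmpl y) ≤ M)).card :=
          Finset.card_le_card (Finset.filter_subset_filter _ (Finset.subset_univ A))
      _ ≤ ((Finset.univ.filter fun y => dist0 x y ≤ M)
            ∪ (Finset.univ.filter fun y => dist0 x (cmpl y) ≤ M)).card := by
          apply Finset.card_le_card
          intro y hy
          simp only [Finset.mem_filter, Finset.mem_univ, true_and, Finset.mem_union] at *
          exact hy
      _ ≤ (Finset.univ.filter fun y => dist0 x y ≤ M).card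
            + (Finset.univ.filter fun y => dist0 x (cmpl y) ≤ M).card :=
          Finset.card_union_le _ _
      _ ≤ V + V := by
          have h1 := card_ball_le x M
          have h2 := card_ball_cmpl x M
          omega
      _ = 2 * V := by omega
  obtain ⟨S, hSA, hSind, hScard⟩ := greedy _ hsymm hrefl (2*V) A hcount
  refine ⟨S, ?_, ?_, ?_⟩
  · -- cardinality bound
    have hAcard : A.card = n.choose (n/2) := card_weight_eq (n/2)
    have h2n : 2^n ≤ (n+1) * A.card := by rw [hAcard]; exact two_pow_le_central
    have hVR : (V:ℝ) ≤ (2:ℝ) ^ (binEntropy p * n) := by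
      have := sum_choose_le_entropy p hp0 hp2 n M hMle
      rw [hVdef]
      push_cast
      exact this
    have hgrow := hn₁ n hnn₁
    set E := (2:ℝ) ^ (ε/3 * n) with hEdef
    set Hn := (2:ℝ) ^ (binEntropy p * n) with hHndef
    have hHnpos : 0 < Hn := Real.rpow_pos_of_pos (by norm_num) _
    have hEpos : 0 < E := Real.rpow_pos_of_pos (by norm_num) _
    have hexp : E * Hn * (2:ℝ) ^ (2*ε/3 * n) = (2:ℝ) ^ ((n:ℕ):ℝ) := by
      rw [hEdef, hHndef, ← Real.rpow_add (by norm_num : (0:ℝ) < 2),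
        ← Real.rpow_add (by norm_num : (0:ℝ) < 2)]
      congr 1
      rw [hεdef]; ring
    have h2nr : (2:ℝ) ^ ((n:ℕ):ℝ) = ((2^n : ℕ) : ℝ) := by
      rw [Real.rpow_natCast]; push_cast; ring
    -- E * Hn * 2(n+1) ≤ 2^n
    have hstep1 : E * Hn * (2 * ((n:ℝ)+1)) ≤ ((2^n : ℕ) : ℝ) := by
      calc E * Hn * (2 * ((n:ℝ)+1)) ≤ E * Hn * (2:ℝ) ^ (2*ε/3 * n) := by
            apply mul_le_mul_of_nonneg_left hgrow (by positivity)
        _ = (2:ℝ) ^ ((n:ℕ):ℝ) := hexp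
        _ = ((2^n : ℕ) : ℝ) := h2nr
    have hstep2 : ((2^n : ℕ) : ℝ) ≤ ((n:ℝ)+1) * ((2*V : ℕ) : ℝ) * (S.card : ℝ) := by
      have hcast : ((2^n : ℕ):ℝ) ≤ (((n+1) * A.card : ℕ) : ℝ) := by exact_mod_cast h2n
      have hcast2 : ((A.card : ℕ):ℝ) ≤ ((2*V * S.card : ℕ) : ℝ) := by exact_mod_cast hScard
      push_cast at hcast hcast2 ⊢
      nlinarith [Nat.cast_nonneg (α := ℝ) n]
    have hstep3 : E * ((n:ℝ)+1) * ((2*V : ℕ) : ℝ) ≤ ((n:ℝ)+1) * ((2*V : ℕ) : ℝ) * (S.card : ℝ) := by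
      calc E * ((n:ℝ)+1) * ((2*V : ℕ) : ℝ)
          ≤ E * ((n:ℝ)+1) * (2 * Hn) := by
            apply mul_le_mul_of_nonneg_left _ (by positivity)
            push_cast
            linarith
        _ = E * Hn * (2 * ((n:ℝ)+1)) := by ring
        _ ≤ ((2^n : ℕ) : ℝ) := hstep1
        _ ≤ ((n:ℝ)+1) * ((2*V : ℕ) : ℝ) * (S.card : ℝ) := hstep2
    have hposfac : (0:ℝ) < ((n:ℝ)+1) * ((2*V : ℕ) : ℝ) := by
      have : (1:ℝ) ≤ ((2*V : ℕ) : ℝ) := by exact_mod_cast (by omega : 1 ≤ 2*V)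
      nlinarith
    rw [hEdef] at hstep3
    calc (2:ℝ) ^ (ε/3 * n) = E := by rw [hEdef]
      _ ≤ (S.card : ℝ) := by
        have h' : E * (((n:ℝ)+1) * ((2*V : ℕ) : ℝ)) ≤ (S.card : ℝ) * (((n:ℝ)+1) * ((2*V : ℕ) : ℝ)) := by
          rw [hEdef]
          nlinarith
        exact le_of_mul_le_mul_right (by linarith [h']) hposfac
  · -- weight property
    intro x hx
    have hxA := hSA hx
    rw [hAdef, Finset.mem_filter] at hxA
    have hw : relWeight x = ((n/2 : ℕ) : ℝ) / n := by
      unfold relWeight; rw [hxA.2]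
    have h1 : n ≤ 3 * (n/2) := by omega
    have h2 : 3 * (n/2) ≤ 2 * n := by omega
    have h1R : (n:ℝ) ≤ 3 * ((n/2 : ℕ):ℝ) := by exact_mod_cast h1
    have h2R : 3 * ((n/2 : ℕ):ℝ) ≤ 2 * n := by exact_mod_cast h2
    rw [hw]
    constructor
    · rw [le_div_iff₀ hnR]; linarith
    · rw [div_le_iff₀ hnR]; linarith
  · -- separation
    intro x hx x' hx' hne
    have hnr := hSind x hx x' hx' hne
    push_neg at hnr
    obtain ⟨hd1, hd2⟩ := hnr
    -- distances are > 2δ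
    have hgt : ∀ a b : Fin n → Bool, M < dist0 a b → 2*δ < hamDist a b := by
      intro a b hab
      have h1 : p * n < (M:ℝ) + 1 := Nat.lt_floor_add_one _
      have h2 : (M:ℝ) + 1 ≤ (dist0 a b : ℝ) := by exact_mod_cast hab
      rw [hamDist_eq_dist0, lt_div_iff₀ hnR, ← hpdef]
      linarith
    have hdisj : ∀ a b : Fin n → Bool, 2*δ < hamDist a b →
        Disjoint (hamBall δ a) (hamBall δ b) := by
      intro a b hab
      rw [Set.disjoint_left]
      intro z hza hzb
      simp only [hamBall, Set.mem_setOf_eq] at hza hzb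
      have htri : hamDist a b ≤ hamDist a z + hamDist b z := by
        rw [hamDist_eq_dist0, hamDist_eq_dist0, hamDist_eq_dist0, ← add_div,
          div_le_div_iff_of_pos_right hnR]
        have := dist0_triangle a b z
        rw [dist0_comm z b] at this
        exact_mod_cast this
      linarith
    have hcx : (fun i => !(x i)) = cmpl x := rfl
    have hcx' : (fun i => !(x' i)) = cmpl x' := rfl
    rw [hcx, hcx']
    have d1 : 2*δ < hamDist x x' := hgt _ _ (by omega)
    have d2 : 2*δ < hamDist x (cmpl x') := hgt _ _ (by omega)
    have d3 : 2*δ < hamDist (cmpl x) x' := by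
      have : dist0 (cmpl x) x' = dist0 x (cmpl x') := dist0_cmpl_left x x'
      exact hgt _ _ (by omega)
    have d4 : 2*δ < hamDist (cmpl x) (cmpl x') := by
      have : dist0 (cmpl x) (cmpl x') = dist0 x x' := dist0_cmpl_cmpl x x'
      exact hgt _ _ (by omega)
    rw [Set.disjoint_union_left]
    constructor <;> rw [Set.disjoint_union_right]
    · exact ⟨hdisj _ _ d1, hdisj _ _ d2⟩
    · exact ⟨hdisj _ _ d3, hdisj _ _ d4⟩
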